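/- Let s,t ≥ 3 with R(s-1,t) ≥ R(s,t-1), and set M = R(s-1,t), m = R(s,t-1). Then for every r ≥ 2, every red/blue edge-coloring of the Kneser graph KG((M+1)r + m - 1, r) contains a red clique of size s or a blue clique of size t; i.e., RKG_r(s,t) ≤ (M+1)r + m - 1. -/

import Mathlib

open Finset

/-- A clique in the Kneser graph `KG(n,r)`: a family of pairwise disjoint
`r`-element subsets of `[n] = {0, …, n-1}`. -/
def IsKneserClique (n r : ℕ) (S : Finset (Finset ℕ)) : Prop :=
  (∀ A ∈ S, A ⊆ Finset.range n ∧ A.card = r) ∧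
  (S : Set (Finset ℕ)).Pairwise Disjoint

/-- A clique all of whose edges get color `b` under the edge-coloring `c`. -/
def MonoClique (c : Finset ℕ → Finset ℕ → Bool) (b : Bool) (S : Finset (Finset ℕ)) : Prop :=
  ∀ A ∈ S, ∀ B ∈ S, A ≠ B → c A B = b

/-- `n` is Ramsey for the Kneser graph `KG(n,r)`: every red/blue edge-coloring
contains a red `s`-clique or a blue `t`-clique. -/
def KneserRamseyProp (n r s t : ℕ) : Prop :=
  ∀ c : Finset ℕ → Finset ℕ → Bool, (∀ A B, c A B = c B A) →
    (∃ S : Finset (Finset ℕ), IsKneserClique n r S ∧ S.card = s ∧ MonoClique c true S) ∨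
    (∃ S : Finset (Finset ℕ), IsKneserClique n r S ∧ S.card = t ∧ MonoClique c false S)

/-- The `r`-Kneser Ramsey number `RKG_r(s,t)`. -/
noncomputable def RKG (r s t : ℕ) : ℕ := sInf {n | KneserRamseyProp n r s t}

/-- `n` is Ramsey for `(s,t)`: every red/blue edge-coloring of the complete
graph on `[n]` contains a red `K_s` or a blue `K_t`. -/
def RamseyProp (n s t : ℕ) : Prop :=
  ∀ c : ℕ → ℕ → Bool, (∀ u v, c u v = c v u) →
    (∃ S : Finset ℕ, S ⊆ Finset.range n ∧ S.card = s ∧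
      ∀ u ∈ S, ∀ v ∈ S, u ≠ v → c u v = true) ∨
    (∃ S : Finset ℕ, S ⊆ Finset.range n ∧ S.card = t ∧
      ∀ u ∈ S, ∀ v ∈ S, u ≠ v → c u v = false)

/-- The classical Ramsey number `R(s,t)`. -/
noncomputable def ramseyNumber (s t : ℕ) : ℕ := sInf {n | RamseyProp n s t}

lemma ramsey_zero_left (n t : ℕ) : RamseyProp n 0 t :=
  fun _ _ => Or.inl ⟨∅, by simp, by simp, by simp⟩

lemma ramsey_zero_right (n s : ℕ) : RamseyProp n s 0 :=
  fun _ _ => Or.inr ⟨∅, by simp, by simp, by simp⟩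

lemma ramsey_step {n₁ n₂ s t : ℕ} (h₁ : RamseyProp n₁ s (t+1)) (h₂ : RamseyProp n₂ (s+1) t) :
    RamseyProp (n₁ + n₂ + 1) (s+1) (t+1) := by
  intro c hc
  classical
  set v := n₁ + n₂ with hv
  have hsplit := Finset.card_filter_add_card_filter_not (s := Finset.range v)
      (p := fun u => c u v = true)
  set R := (Finset.range v).filter (fun u => c u v = true) with hRdef
  set B := (Finset.range v).filter (fun u => ¬ c u v = true) with hBdef
  rw [Finset.card_range] at hsplit
  have hcase : n₁ ≤ R.card ∨ n₂ ≤ B.card := by omega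
  rcases hcase with hcard | hcard
  · set g : ℕ → ℕ := fun i => if h : i < R.card then R.orderEmbOfFin rfl ⟨i, h⟩ else i with hg
    have hgmem : ∀ i, i < n₁ → g i ∈ R := by
      intro i hi
      simp only [hg]
      rw [dif_pos (lt_of_lt_of_le hi hcard)]
      exact Finset.orderEmbOfFin_mem _ _ _
    have hginj : ∀ a, a < n₁ → ∀ b, b < n₁ → g a = g b → a = b := by
      intro a ha b hb h
      simp only [hg, dif_pos (lt_of_lt_of_le ha hcard), dif_pos (lt_of_lt_of_le hb hcard)] at h
      have := (R.orderEmbOfFin rfl).injective h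
      exact congrArg Fin.val this
    have hRmem : ∀ u ∈ R, u ∈ Finset.range v ∧ c u v = true := by
      intro u hu
      exact ⟨(Finset.mem_filter.mp hu).1, (Finset.mem_filter.mp hu).2⟩
    rcases h₁ (fun u w => c (g u) (g w)) (fun u w => hc _ _) with
      ⟨S, hSsub, hScard, hSmono⟩ | ⟨S, hSsub, hScard, hSmono⟩
    · -- red s-clique; add v
      have himg : ∀ x ∈ S.image g, x ∈ R := by
        intro x hx
        obtain ⟨u, hu, rfl⟩ := Finset.mem_image.mp hx
        exact hgmem u (Finset.mem_range.mp (hSsub hu))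
      have hvnot : v ∉ S.image g := by
        intro h
        exact absurd (Finset.mem_range.mp (hRmem _ (himg _ h)).1) (lt_irrefl v)
      refine Or.inl ⟨insert v (S.image g), ?_, ?_, ?_⟩
      · intro x hx
        rcases Finset.mem_insert.mp hx with rfl | hx
        · exact Finset.mem_range.mpr (by omega)
        · exact Finset.mem_range.mpr (by
            have := Finset.mem_range.mp (hRmem _ (himg _ hx)).1; omega)
      · rw [Finset.card_insert_of_notMem hvnot,
          Finset.card_image_of_injOn
            (fun x hx y hy h => hginj x (Finset.mem_range.mp (hSsub hx)) y
              (Finset.mem_range.mp (hSsub hy)) h), hScard]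
      · intro x hx y hy hxy
        rcases Finset.mem_insert.mp hx with rfl | hx
        · rcases Finset.mem_insert.mp hy with rfl | hy
          · exact absurd rfl hxy
          · rw [hc]; exact (hRmem _ (himg _ hy)).2
        · rcases Finset.mem_insert.mp hy with rfl | hy
          · exact (hRmem _ (himg _ hx)).2
          · obtain ⟨ux, hux, rfl⟩ := Finset.mem_image.mp hx
            obtain ⟨uy, huy, rfl⟩ := Finset.mem_image.mp hy
            exact hSmono ux hux uy huy (fun h => hxy (by rw [h]))
    · -- blue (t+1)-clique
      refine Or.inr ⟨S.image g, ?_, ?_, ?_⟩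
      · intro x hx
        obtain ⟨u, hu, rfl⟩ := Finset.mem_image.mp hx
        have := Finset.mem_range.mp (hRmem _ (hgmem u (Finset.mem_range.mp (hSsub hu)))).1
        exact Finset.mem_range.mpr (by omega)
      · rw [Finset.card_image_of_injOn
          (fun x hx y hy h => hginj x (Finset.mem_range.mp (hSsub hx)) y
            (Finset.mem_range.mp (hSsub hy)) h), hScard]
      · intro x hx y hy hxy
        obtain ⟨ux, hux, rfl⟩ := Finset.mem_image.mp hx
        obtain ⟨uy, huy, rfl⟩ := Finset.mem_image.mp hy
        exact hSmono ux hux uy huy (fun h => hxy (by rw [h]))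
  · set g : ℕ → ℕ := fun i => if h : i < B.card then B.orderEmbOfFin rfl ⟨i, h⟩ else i with hg
    have hgmem : ∀ i, i < n₂ → g i ∈ B := by
      intro i hi
      simp only [hg]
      rw [dif_pos (lt_of_lt_of_le hi hcard)]
      exact Finset.orderEmbOfFin_mem _ _ _
    have hginj : ∀ a, a < n₂ → ∀ b, b < n₂ → g a = g b → a = b := by
      intro a ha b hb h
      simp only [hg, dif_pos (lt_of_lt_of_le ha hcard), dif_pos (lt_of_lt_of_le hb hcard)] at h
      have := (B.orderEmbOfFin rfl).injective h
      exact congrArg Fin.val this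
    have hBmem : ∀ u ∈ B, u ∈ Finset.range v ∧ c u v = false := by
      intro u hu
      refine ⟨(Finset.mem_filter.mp hu).1, ?_⟩
      have := (Finset.mem_filter.mp hu).2
      simpa using this
    rcases h₂ (fun u w => c (g u) (g w)) (fun u w => hc _ _) with
      ⟨S, hSsub, hScard, hSmono⟩ | ⟨S, hSsub, hScard, hSmono⟩
    · refine Or.inl ⟨S.image g, ?_, ?_, ?_⟩
      · intro x hx
        obtain ⟨u, hu, rfl⟩ := Finset.mem_image.mp hx
        have := Finset.mem_range.mp (hBmem _ (hgmem u (Finset.mem_range.mp (hSsub hu)))).1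
        exact Finset.mem_range.mpr (by omega)
      · rw [Finset.card_image_of_injOn
          (fun x hx y hy h => hginj x (Finset.mem_range.mp (hSsub hx)) y
            (Finset.mem_range.mp (hSsub hy)) h), hScard]
      · intro x hx y hy hxy
        obtain ⟨ux, hux, rfl⟩ := Finset.mem_image.mp hx
        obtain ⟨uy, huy, rfl⟩ := Finset.mem_image.mp hy
        exact hSmono ux hux uy huy (fun h => hxy (by rw [h]))
    · have himg : ∀ x ∈ S.image g, x ∈ B := by
        intro x hx
        obtain ⟨u, hu, rfl⟩ := Finset.mem_image.mp hx
        exact hgmem u (Finset.mem_range.mp (hSsub hu))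
      have hvnot : v ∉ S.image g := by
        intro h
        exact absurd (Finset.mem_range.mp (hBmem _ (himg _ h)).1) (lt_irrefl v)
      refine Or.inr ⟨insert v (S.image g), ?_, ?_, ?_⟩
      · intro x hx
        rcases Finset.mem_insert.mp hx with rfl | hx
        · exact Finset.mem_range.mpr (by omega)
        · exact Finset.mem_range.mpr (by
            have := Finset.mem_range.mp (hBmem _ (himg _ hx)).1; omega)
      · rw [Finset.card_insert_of_notMem hvnot,
          Finset.card_image_of_injOn
            (fun x hx y hy h => hginj x (Finset.mem_range.mp (hSsub hx)) y
              (Finset.mem_range.mp (hSsub hy)) h), hScard]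
      · intro x hx y hy hxy
        rcases Finset.mem_insert.mp hx with rfl | hx
        · rcases Finset.mem_insert.mp hy with rfl | hy
          · exact absurd rfl hxy
          · rw [hc]; exact (hBmem _ (himg _ hy)).2
        · rcases Finset.mem_insert.mp hy with rfl | hy
          · exact (hBmem _ (himg _ hx)).2
          · obtain ⟨ux, hux, rfl⟩ := Finset.mem_image.mp hx
            obtain ⟨uy, huy, rfl⟩ := Finset.mem_image.mp hy
            exact hSmono ux hux uy huy (fun h => hxy (by rw [h]))

lemma ramsey_exists (s t : ℕ) : ∃ n, RamseyProp n s t := by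
  have key : ∀ N s t : ℕ, s + t ≤ N → ∃ n, RamseyProp n s t := by
    intro N
    induction N with
    | zero =>
        intro s t h
        have hs : s = 0 := by omega
        subst hs
        exact ⟨0, ramsey_zero_left 0 t⟩
    | succ N ih =>
        intro s t h
        match s, t with
        | 0, t => exact ⟨0, ramsey_zero_left 0 t⟩
        | s+1, 0 => exact ⟨0, ramsey_zero_right 0 (s+1)⟩
        | s+1, t+1 =>
            obtain ⟨n₁, h₁⟩ := ih s (t+1) (by omega)
            obtain ⟨n₂, h₂⟩ := ih (s+1) t (by omega)
            exact ⟨n₁ + n₂ + 1, ramsey_step h₁ h₂⟩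
  exact key (s+t) s t le_rfl

lemma exists_disjoint_family (r : ℕ) (hr : 1 ≤ r) :
    ∀ (j : ℕ) (V : Finset ℕ), r * j ≤ V.card →
    ∃ T : Finset (Finset ℕ), T.card = j ∧ (∀ A ∈ T, A ⊆ V ∧ A.card = r) ∧
      (T : Set (Finset ℕ)).Pairwise Disjoint := by
  intro j
  induction j with
  | zero => intro V _; exact ⟨∅, by simp, by simp, by simp⟩
  | succ j ih =>
      intro V hV
      have hrj : r * (j+1) = r * j + r := by ring
      obtain ⟨S, hSV, hScard⟩ := Finset.exists_subset_card_eq (s := V) (n := r) (by omega)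
      obtain ⟨T, hT1, hT2, hT3⟩ := ih (V \ S) (by rw [Finset.card_sdiff_of_subset hSV, hScard]; omega)
      have hSnot : S ∉ T := by
        intro hmem
        obtain ⟨x, hx⟩ := Finset.card_pos.mp (show 0 < S.card by omega)
        exact (Finset.mem_sdiff.mp ((hT2 S hmem).1 hx)).2 hx
      refine ⟨insert S T, ?_, ?_, ?_⟩
      · rw [Finset.card_insert_of_notMem hSnot, hT1]
      · intro A hA
        rcases Finset.mem_insert.mp hA with rfl | hA
        · exact ⟨hSV, hScard⟩
        · exact ⟨((hT2 A hA).1).trans (Finset.sdiff_subset), (hT2 A hA).2⟩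
      · rw [Finset.coe_insert]
        rw [Set.pairwise_insert_of_symm]
        refine ⟨hT3, ?_⟩
        intro B hB _
        rw [Finset.disjoint_left]
        intro x hxS hxB
        exact (Finset.mem_sdiff.mp ((hT2 B hB).1 hxB)).2 hxS

lemma afl (r : ℕ) (hr : 1 ≤ r) (P : Finset ℕ → Prop) :
    ∀ (k : ℕ) (V : Finset ℕ), (r+1) * k - 1 ≤ V.card →
    ∃ T : Finset (Finset ℕ), T.card = k ∧ (∀ A ∈ T, A ⊆ V ∧ A.card = r) ∧
      (T : Set (Finset ℕ)).Pairwise Disjoint ∧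
      ((∀ A ∈ T, P A) ∨ (∀ A ∈ T, ¬ P A)) := by
  intro k
  induction k with
  | zero => intro V _; exact ⟨∅, by simp, by simp, by simp, Or.inl (by simp)⟩
  | succ k ih =>
    intro V hV
    by_contra hcon
    have hrk : (r+1) * (k+1) = (r+1) * k + r + 1 := by ring
    -- every (r+1)-subset of V is monochromatically "full"
    have hfull : ∀ T : Finset ℕ, T ⊆ V → T.card = r + 1 →
        (∀ S : Finset ℕ, S ⊆ T → S.card = r → P S) ∨
        (∀ S : Finset ℕ, S ⊆ T → S.card = r → ¬ P S) := by
      intro T hTV hTcard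
      have hcd : (r+1) * k - 1 ≤ (V \ T).card := by
        rw [Finset.card_sdiff_of_subset hTV, hTcard]; omega
      obtain ⟨T₀, hT₀card, hT₀sub, hT₀disj, hT₀mono⟩ := ih (V \ T) hcd
      have hbuild : ∀ S : Finset ℕ, S ⊆ T → S.card = r →
          T₀.card = k → S ∉ T₀ ∧ (∀ A ∈ insert S T₀, A ⊆ V ∧ A.card = r) ∧
          ((insert S T₀ : Finset (Finset ℕ)) : Set (Finset ℕ)).Pairwise Disjoint := by
        intro S hST hScard hcardk
        have hSnot : S ∉ T₀ := by
          intro hmem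
          obtain ⟨x, hx⟩ := Finset.card_pos.mp (show 0 < S.card by omega)
          exact (Finset.mem_sdiff.mp ((hT₀sub S hmem).1 hx)).2 (hST hx)
        refine ⟨hSnot, ?_, ?_⟩
        · intro A hA
          rcases Finset.mem_insert.mp hA with rfl | hA
          · exact ⟨hST.trans hTV, hScard⟩
          · exact ⟨((hT₀sub A hA).1).trans (Finset.sdiff_subset), (hT₀sub A hA).2⟩
        · rw [Finset.coe_insert, Set.pairwise_insert_of_symm]
          refine ⟨hT₀disj, ?_⟩
          intro B hB _
          rw [Finset.disjoint_left]
          intro x hxS hxB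
          exact (Finset.mem_sdiff.mp ((hT₀sub B hB).1 hxB)).2 (hST hxS)
      rcases hT₀mono with hallP | hallN
      · right
        intro S hST hScard hPS
        obtain ⟨hSnot, hsub, hdisj⟩ := hbuild S hST hScard hT₀card
        refine hcon ⟨insert S T₀, ?_, hsub, hdisj, Or.inl ?_⟩
        · rw [Finset.card_insert_of_notMem hSnot, hT₀card]
        · intro A hA
          rcases Finset.mem_insert.mp hA with rfl | hA
          · exact hPS
          · exact hallP A hA
      · left
        intro S hST hScard
        by_contra hPS
        obtain ⟨hSnot, hsub, hdisj⟩ := hbuild S hST hScard hT₀card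
        refine hcon ⟨insert S T₀, ?_, hsub, hdisj, Or.inr ?_⟩
        · rw [Finset.card_insert_of_notMem hSnot, hT₀card]
        · intro A hA
          rcases Finset.mem_insert.mp hA with rfl | hA
          · exact hPS
          · exact hallN A hA
    -- all r-subsets of V have the same P-value
    have hsame : ∀ d : ℕ, ∀ S S' : Finset ℕ, S ⊆ V → S' ⊆ V → S.card = r → S'.card = r →
        (S \ S').card = d → (P S ↔ P S') := by
      intro d
      induction d with
      | zero =>
          intro S S' h1 h2 h3 h4 h5
          have hsub : S ⊆ S' := by
            rwa [Finset.card_eq_zero, Finset.sdiff_eq_empty_iff_subset] at h5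
          have : S = S' := Finset.eq_of_subset_of_card_le hsub (by omega)
          rw [this]
      | succ d ihd =>
          intro S S' hSV hS'V hScard hS'card hcd
          obtain ⟨x, hx⟩ := Finset.card_pos.mp (show 0 < (S \ S').card by omega)
          have hcd' : 0 < (S' \ S).card := by
            have h1 := Finset.card_sdiff_add_card_inter S S'
            have h2 := Finset.card_sdiff_add_card_inter S' S
            rw [Finset.inter_comm] at h2
            omega
          obtain ⟨y, hy⟩ := Finset.card_pos.mp hcd'
          have hxS : x ∈ S := (Finset.mem_sdiff.mp hx).1
          have hxS' : x ∉ S' := (Finset.mem_sdiff.mp hx).2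
          have hyS' : y ∈ S' := (Finset.mem_sdiff.mp hy).1
          have hyS : y ∉ S := (Finset.mem_sdiff.mp hy).2
          set S₁ : Finset ℕ := insert y (S.erase x) with hS₁
          have hS₁V : S₁ ⊆ V := by
            intro z hz
            rcases Finset.mem_insert.mp hz with rfl | hz
            · exact hS'V hyS'
            · exact hSV (Finset.mem_of_mem_erase hz)
          have hS₁card : S₁.card = r := by
            rw [hS₁, Finset.card_insert_of_notMem (fun h => hyS (Finset.mem_of_mem_erase h)),
              Finset.card_erase_of_mem hxS, hScard]
            omega
          have hS₁T : S₁ ⊆ insert y S := by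
            intro z hz
            rcases Finset.mem_insert.mp hz with rfl | hz
            · exact Finset.mem_insert_self _ _
            · exact Finset.mem_insert_of_mem (Finset.mem_of_mem_erase hz)
          have hST : S ⊆ insert y S := Finset.subset_insert _ _
          have hTV : insert y S ⊆ V := by
            intro z hz
            rcases Finset.mem_insert.mp hz with rfl | hz
            · exact hS'V hyS'
            · exact hSV hz
          have hTcard : (insert y S).card = r + 1 := by
            rw [Finset.card_insert_of_notMem hyS, hScard]
          have hstep : P S ↔ P S₁ := by
            rcases hfull (insert y S) hTV hTcard with hall | hall
            · exact iff_of_true (hall S hST hScard) (hall S₁ hS₁T hS₁card)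
            · exact iff_of_false (hall S hST hScard) (hall S₁ hS₁T hS₁card)
          have hsdiff : S₁ \ S' = (S \ S').erase x := by
            ext z
            simp only [hS₁, Finset.mem_sdiff, Finset.mem_erase, Finset.mem_insert]
            constructor
            · rintro ⟨h1 | ⟨h1, h2⟩, h3⟩
              · exact absurd (h1 ▸ hyS') h3
              · exact ⟨h1, h2, h3⟩
            · rintro ⟨h1, h2, h3⟩
              exact ⟨Or.inr ⟨h1, h2⟩, h3⟩
          have hnext : P S₁ ↔ P S' := by
            apply ihd S₁ S' hS₁V hS'V hS₁card hS'card
            rw [hsdiff, Finset.card_erase_of_mem hx, hcd]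
            omega
          exact hstep.trans hnext
    -- conclude
    obtain ⟨S₀, hS₀V, hS₀card⟩ := Finset.exists_subset_card_eq (s := V) (n := r) (by omega)
    obtain ⟨T, hTcard, hTsub, hTdisj⟩ := exists_disjoint_family r hr (k+1) V
      (by
        have h9 : r * (k+1) + (k+1) = (r+1)*(k+1) := by ring
        omega)
    apply hcon
    refine ⟨T, hTcard, hTsub, hTdisj, ?_⟩
    rcases Classical.em (P S₀) with hP | hP
    · left
      intro A hA
      exact (hsame ((A \ S₀).card) A S₀ (hTsub A hA).1 hS₀V (hTsub A hA).2 hS₀card rfl).mpr hP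
    · right
      intro A hA hPA
      exact hP ((hsame ((A \ S₀).card) A S₀ (hTsub A hA).1 hS₀V (hTsub A hA).2 hS₀card rfl).mp hPA)

lemma asym (r M m : ℕ) (hr : 1 ≤ r) (hm1 : 1 ≤ m) (hmM : m ≤ M) (P : Finset ℕ → Prop)
    (V : Finset ℕ) (hV : M * r + m - 1 ≤ V.card) :
    (∃ T : Finset (Finset ℕ), T.card = M ∧ (∀ A ∈ T, A ⊆ V ∧ A.card = r) ∧
      (T : Set (Finset ℕ)).Pairwise Disjoint ∧ ∀ A ∈ T, P A) ∨
    (∃ T : Finset (Finset ℕ), T.card = m ∧ (∀ A ∈ T, A ⊆ V ∧ A.card = r) ∧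
      (T : Set (Finset ℕ)).Pairwise Disjoint ∧ ∀ A ∈ T, ¬ P A) := by
  classical
  set K := V.sup id + 1 with hK
  have hVK : ∀ x ∈ V, x < K := fun x hx => Nat.lt_succ_of_le (Finset.le_sup (f := id) hx)
  set pad := (Finset.range (M - m)).image (fun i => i + K) with hpad
  have hpadcard : pad.card = M - m := by
    rw [hpad, Finset.card_image_of_injective _ (add_left_injective K), Finset.card_range]
  have hdisjVpad : ∀ x ∈ pad, x ∉ V := by
    intro x hx hxV
    obtain ⟨i, _, rfl⟩ := Finset.mem_image.mp hx
    have := hVK _ hxV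
    omega
  set W := V ∪ pad with hW
  have hWcard : (r+1) * M - 1 ≤ W.card := by
    rw [hW, Finset.card_union_of_disjoint
      (Finset.disjoint_left.mpr (fun a ha hpa => hdisjVpad a hpa ha)), hpadcard]
    have h1 : (r+1)*M = M*r + M := by ring
    omega
  obtain ⟨T, hTcard, hTsub, hTdisj, hTmono⟩ := afl r hr (fun A => A ⊆ V ∧ P A) M W hWcard
  rcases hTmono with hQ | hQ
  · left
    exact ⟨T, hTcard, fun A hA => ⟨(hQ A hA).1, (hTsub A hA).2⟩, hTdisj,
      fun A hA => (hQ A hA).2⟩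
  · right
    set T₁ := T.filter (fun A => A ⊆ V) with hT₁
    have hT₁T : T₁ ⊆ T := Finset.filter_subset _ _
    have hmeet : ∀ A ∈ T \ T₁, (A ∩ pad).Nonempty := by
      intro A hA
      have hAT : A ∈ T := (Finset.mem_sdiff.mp hA).1
      have hA1 : A ∉ T₁ := (Finset.mem_sdiff.mp hA).2
      have hnotsub : ¬ A ⊆ V := fun hs => hA1 (Finset.mem_filter.mpr ⟨hAT, hs⟩)
      obtain ⟨x, hxA, hxV⟩ := Finset.not_subset.mp hnotsub
      have hxW : x ∈ W := (hTsub A hAT).1 hxA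
      rcases Finset.mem_union.mp hxW with h | h
      · exact absurd h hxV
      · exact ⟨x, Finset.mem_inter.mpr ⟨hxA, h⟩⟩
    have hcard2 : (T \ T₁).card ≤ M - m := by
      rw [← hpadcard]
      by_contra hgt
      push_neg at hgt
      obtain ⟨A, hA, B, hB, hAB, hfeq⟩ :=
        Finset.exists_ne_map_eq_of_card_lt_of_maps_to hgt
          (f := fun A => if h : (A ∩ pad).Nonempty then (A ∩ pad).min' h else 0)
          (by
            intro A hA
            show (if h : (A ∩ pad).Nonempty then (A ∩ pad).min' h else 0) ∈ pad
            rw [dif_pos (hmeet A hA)]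
            exact (Finset.mem_inter.mp ((A ∩ pad).min'_mem (hmeet A hA))).2)
      rw [dif_pos (hmeet A hA), dif_pos (hmeet B hB)] at hfeq
      have hpA := (A ∩ pad).min'_mem (hmeet A hA)
      have hpB := (B ∩ pad).min'_mem (hmeet B hB)
      have hdAB : Disjoint A B := hTdisj (Finset.mem_coe.mpr ((Finset.mem_sdiff.mp hA).1))
        (Finset.mem_coe.mpr ((Finset.mem_sdiff.mp hB).1)) hAB
      have : (A ∩ pad).min' (hmeet A hA) ∈ A := (Finset.mem_inter.mp hpA).1
      have h2 : (A ∩ pad).min' (hmeet A hA) ∈ B := by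
        rw [hfeq]
        exact (Finset.mem_inter.mp hpB).1
      exact Finset.disjoint_left.mp hdAB this h2
    have hT₁card : m ≤ T₁.card := by
      have := Finset.card_sdiff_of_subset hT₁T
      have h3 := Finset.card_le_card hT₁T
      omega
    obtain ⟨T₂, hT₂sub, hT₂card⟩ := Finset.exists_subset_card_eq hT₁card
    refine ⟨T₂, hT₂card, ?_, ?_, ?_⟩
    · intro A hA
      have hAT₁ := hT₂sub hA
      exact ⟨(Finset.mem_filter.mp hAT₁).2, (hTsub A (hT₁T hAT₁)).2⟩
    · exact hTdisj.mono (by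
        intro A hA
        exact Finset.mem_coe.mpr (hT₁T (hT₂sub (Finset.mem_coe.mp hA))))
    · intro A hA
      have hAT₁ := hT₂sub hA
      have := hQ A (hT₁T hAT₁)
      exact fun hp => this ⟨(Finset.mem_filter.mp hAT₁).2, hp⟩

lemma image_clique (N r n : ℕ) (c : Finset ℕ → Finset ℕ → Bool) (b : Bool)
    (T : Finset (Finset ℕ)) (hTsub : ∀ A ∈ T, A ⊆ Finset.range N ∧ A.card = r)
    (hTdisj : (T : Set (Finset ℕ)).Pairwise Disjoint)
    (g : ℕ → Finset ℕ) (hgmem : ∀ i, i < n → g i ∈ T)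
    (hginj : ∀ i, i < n → ∀ j, j < n → g i = g j → i = j)
    (S : Finset ℕ) (hS : S ⊆ Finset.range n)
    (hmono : ∀ u ∈ S, ∀ v ∈ S, u ≠ v → c (g u) (g v) = b) :
    IsKneserClique N r (S.image g) ∧ (S.image g).card = S.card ∧
      MonoClique c b (S.image g) ∧ ∀ A ∈ S.image g, A ∈ T := by
  have himg : ∀ A ∈ S.image g, A ∈ T := by
    intro A hA
    obtain ⟨u, hu, rfl⟩ := Finset.mem_image.mp hA
    exact hgmem u (Finset.mem_range.mp (hS hu))
  refine ⟨⟨fun A hA => hTsub A (himg A hA), ?_⟩, ?_, ?_, himg⟩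
  · exact hTdisj.mono (fun A hA => Finset.mem_coe.mpr (himg A (Finset.mem_coe.mp hA)))
  · exact Finset.card_image_of_injOn (fun x hx y hy h =>
      hginj x (Finset.mem_range.mp (hS hx)) y (Finset.mem_range.mp (hS hy)) h)
  · intro A hA B hB hne
    obtain ⟨u, hu, rfl⟩ := Finset.mem_image.mp hA
    obtain ⟨v, hv, rfl⟩ := Finset.mem_image.mp hB
    exact hmono u hu v hv (fun h => hne (by rw [h]))

lemma insert_clique (N r : ℕ) (c : Finset ℕ → Finset ℕ → Bool) (b : Bool) (hub : Finset ℕ)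
    (hhubsub : hub ⊆ Finset.range N) (hhubcard : hub.card = r) (hr : 1 ≤ r)
    (S : Finset (Finset ℕ)) (hK : IsKneserClique N r S)
    (hdisj : ∀ A ∈ S, Disjoint hub A)
    (hcol : ∀ A ∈ S, c hub A = b) (hsymm : ∀ A B, c A B = c B A)
    (hM : MonoClique c b S) :
    IsKneserClique N r (insert hub S) ∧ (insert hub S).card = S.card + 1 ∧
      MonoClique c b (insert hub S) := by
  have hnot : hub ∉ S := by
    intro h
    have h2 := hdisj hub h
    rw [disjoint_self] at h2
    rw [h2] at hhubcard
    simp at hhubcard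
    omega
  refine ⟨⟨?_, ?_⟩, ?_, ?_⟩
  · intro A hA
    rcases Finset.mem_insert.mp hA with rfl | hA
    · exact ⟨hhubsub, hhubcard⟩
    · exact hK.1 A hA
  · rw [Finset.coe_insert, Set.pairwise_insert_of_symm]
    exact ⟨hK.2, fun B hB _ => hdisj B hB⟩
  · rw [Finset.card_insert_of_notMem hnot]
  · intro A hA B hB hne
    rcases Finset.mem_insert.mp hA with rfl | hA
    · rcases Finset.mem_insert.mp hB with rfl | hB
      · exact absurd rfl hne
      · exact hcol B hB
    · rcases Finset.mem_insert.mp hB with hB' | hB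
      · rw [hB', hsymm]; exact hcol A hA
      · exact hM A hA B hB hne

lemma ramseyProp_ramseyNumber (s t : ℕ) : RamseyProp (ramseyNumber s t) s t :=
  Nat.sInf_mem (ramsey_exists s t)

lemma one_le_ramseyNumber {s t : ℕ} (hs : 1 ≤ s) (ht : 1 ≤ t) : 1 ≤ ramseyNumber s t := by
  by_contra h
  have h0 : ramseyNumber s t = 0 := by omega
  have hp := ramseyProp_ramseyNumber s t
  rw [h0] at hp
  rcases hp (fun _ _ => true) (fun _ _ => rfl) with ⟨S, hsub, hcard, _⟩ | ⟨S, hsub, hcard, _⟩ <;>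
  · rw [Finset.range_zero, Finset.subset_empty] at hsub
    subst hsub
    simp at hcard
    omega

theorem rkg_le_general (r s t : ℕ) (hr : 2 ≤ r) (hs : 3 ≤ s) (ht : 3 ≤ t)
    (hMm : ramseyNumber s (t - 1) ≤ ramseyNumber (s - 1) t) :
    RKG r s t ≤ (ramseyNumber (s - 1) t + 1) * r + ramseyNumber s (t - 1) - 1 := by
  classical
  obtain ⟨a, rfl⟩ : ∃ a, s = a + 1 := ⟨s - 1, by omega⟩
  obtain ⟨b, rfl⟩ : ∃ b, t = b + 1 := ⟨t - 1, by omega⟩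
  simp only [Nat.add_sub_cancel] at hMm ⊢
  set M := ramseyNumber a (b+1) with hMdef
  set m := ramseyNumber (a+1) b with hmdef
  have hRM : RamseyProp M a (b+1) := ramseyProp_ramseyNumber a (b+1)
  have hRm : RamseyProp m (a+1) b := ramseyProp_ramseyNumber (a+1) b
  have hm1 : 1 ≤ m := one_le_ramseyNumber (by omega) (by omega)
  apply Nat.sInf_le
  show KneserRamseyProp ((M+1) * r + m - 1) r (a+1) (b+1)
  set N := (M+1) * r + m - 1 with hNdef
  intro c hc
  set hub : Finset ℕ := Finset.range r with hhub
  have hmul : (M+1)*r = M*r + r := by ring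
  have hrN : r ≤ N := by omega
  have hhubsub : hub ⊆ Finset.range N := by
    rw [hhub]; exact Finset.range_subset_range.mpr hrN
  have hhubcard : hub.card = r := by rw [hhub, Finset.card_range]
  set V := Finset.range N \ hub with hVdef
  have hVcard : M * r + m - 1 ≤ V.card := by
    rw [hVdef, Finset.card_sdiff_of_subset hhubsub, Finset.card_range, hhubcard]
    omega
  have hVdisj : ∀ A : Finset ℕ, A ⊆ V → Disjoint hub A := by
    intro A hA
    rw [Finset.disjoint_left]
    intro x hx hxA
    exact (Finset.mem_sdiff.mp (hA hxA)).2 hx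
  have hVrange : ∀ A : Finset ℕ, A ⊆ V → A ⊆ Finset.range N := by
    intro A hA
    rw [hVdef] at hA
    exact hA.trans Finset.sdiff_subset
  rcases asym r M m (by omega) hm1 hMm (fun A => c hub A = true) V hVcard with
    ⟨T, hTcard, hTsub, hTdisj, hThub⟩ | ⟨T, hTcard, hTsub, hTdisj, hThub⟩
  · -- M pairwise disjoint red neighbours of hub
    set g : ℕ → Finset ℕ :=
      fun i => if h : i < T.card then ((T.equivFin.symm ⟨i, h⟩ : {x // x ∈ T}) : Finset ℕ) else ∅
      with hg
    have hgmem : ∀ i, i < M → g i ∈ T := by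
      intro i hi
      have hi' : i < T.card := by omega
      simp only [hg]
      rw [dif_pos hi']
      exact Finset.coe_mem _
    have hginj : ∀ i, i < M → ∀ j, j < M → g i = g j → i = j := by
      intro i hi j hj hij
      have hi' : i < T.card := by omega
      have hj' : j < T.card := by omega
      simp only [hg, dif_pos hi', dif_pos hj'] at hij
      have h2 := T.equivFin.symm.injective (Subtype.coe_injective hij)
      exact congrArg Fin.val h2
    have hTsub' : ∀ A ∈ T, A ⊆ Finset.range N ∧ A.card = r :=
      fun A hA => ⟨hVrange A (hTsub A hA).1, (hTsub A hA).2⟩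
    rcases hRM (fun u v => c (g u) (g v)) (fun u v => hc _ _) with
      ⟨S, hSsub, hScard, hSmono⟩ | ⟨S, hSsub, hScard, hSmono⟩
    · obtain ⟨hK, hcard, hmono, himg⟩ :=
        image_clique N r M c true T hTsub' hTdisj g hgmem hginj S hSsub hSmono
      obtain ⟨hK2, hcard2, hmono2⟩ :=
        insert_clique N r c true hub hhubsub hhubcard (by omega) (S.image g) hK
          (fun A hA => hVdisj A (hTsub A (himg A hA)).1)
          (fun A hA => hThub A (himg A hA)) hc hmono
      exact Or.inl ⟨insert hub (S.image g), hK2, by rw [hcard2, hcard, hScard], hmono2⟩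
    · obtain ⟨hK, hcard, hmono, _⟩ :=
        image_clique N r M c false T hTsub' hTdisj g hgmem hginj S hSsub hSmono
      exact Or.inr ⟨S.image g, hK, by rw [hcard, hScard], hmono⟩
  · -- m pairwise disjoint blue neighbours of hub
    set g : ℕ → Finset ℕ :=
      fun i => if h : i < T.card then ((T.equivFin.symm ⟨i, h⟩ : {x // x ∈ T}) : Finset ℕ) else ∅
      with hg
    have hgmem : ∀ i, i < m → g i ∈ T := by
      intro i hi
      have hi' : i < T.card := by omega
      simp only [hg]
      rw [dif_pos hi']
      exact Finset.coe_mem _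
    have hginj : ∀ i, i < m → ∀ j, j < m → g i = g j → i = j := by
      intro i hi j hj hij
      have hi' : i < T.card := by omega
      have hj' : j < T.card := by omega
      simp only [hg, dif_pos hi', dif_pos hj'] at hij
      have h2 := T.equivFin.symm.injective (Subtype.coe_injective hij)
      exact congrArg Fin.val h2
    have hTsub' : ∀ A ∈ T, A ⊆ Finset.range N ∧ A.card = r :=
      fun A hA => ⟨hVrange A (hTsub A hA).1, (hTsub A hA).2⟩
    have hThub' : ∀ A ∈ T, c hub A = false := by
      intro A hA
      have := hThub A hA
      simpa using this
    rcases hRm (fun u v => c (g u) (g v)) (fun u v => hc _ _) with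
      ⟨S, hSsub, hScard, hSmono⟩ | ⟨S, hSsub, hScard, hSmono⟩
    · obtain ⟨hK, hcard, hmono, _⟩ :=
        image_clique N r m c true T hTsub' hTdisj g hgmem hginj S hSsub hSmono
      exact Or.inl ⟨S.image g, hK, by rw [hcard, hScard], hmono⟩
    · obtain ⟨hK, hcard, hmono, himg⟩ :=
        image_clique N r m c false T hTsub' hTdisj g hgmem hginj S hSsub hSmono
      obtain ⟨hK2, hcard2, hmono2⟩ :=
        insert_clique N r c false hub hhubsub hhubcard (by omega) (S.image g) hK
          (fun A hA => hVdisj A (hTsub A (himg A hA)).1)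
          (fun A hA => hThub' A (himg A hA)) hc hmono
      exact Or.inr ⟨insert hub (S.image g), hK2, by rw [hcard2, hcard, hScard], hmono2⟩
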